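/- Let X, Y, Z be random vectors, with W_X, W_Y, W_Z the Moore–Penrose inverses of Var(X), Var(Y), Var(Z) respectively. If Cov_Y(X,Z) = 0 (adjusted orthogonality of X and Z given Y), then T_X(Z) = P_Y(Z)·T_X(Y)·P_Z(Y), i.e. Cov(Z,X)·W_X·Cov(X,Z)·W_Z = Cov(Z,Y)·W_Y·[Cov(Y,X)·W_X·Cov(X,Y)·W_Y]·Cov(Y,Z)·W_Z. -/

import Mathlib

open MeasureTheory Matrix

variable {Ω : Type*}

/-- The covariance matrix of two random vectors `B` (dimension `m`) and `D` (dimension `n`):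
the `(i,j)` entry is `E[Bᵢ·Dⱼ] − E[Bᵢ]·E[Dⱼ]`. -/
noncomputable def cov [MeasurableSpace Ω] (μ : Measure Ω) {m n : ℕ}
    (B : Fin m → Ω → ℝ) (D : Fin n → Ω → ℝ) : Matrix (Fin m) (Fin n) ℝ :=
  Matrix.of fun i j =>
    (∫ ω, B i ω * D j ω ∂μ) - (∫ ω, B i ω ∂μ) * (∫ ω, D j ω ∂μ)

/-- `W` is a Moore–Penrose inverse of `V`. -/
def IsMoorePenrose {m n : ℕ} (V : Matrix (Fin m) (Fin n) ℝ)
    (W : Matrix (Fin n) (Fin m) ℝ) : Prop :=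
  V * W * V = V ∧ W * V * W = W ∧ (V * W)ᵀ = V * W ∧ (W * V)ᵀ = W * V

/-- The adjusted expectation `E_D(B)` (computed with the matrix `W`, intended to be the
Moore–Penrose inverse of `Var(D)`): the `i`-th component is
`E[Bᵢ] + Σ_j (Cov(B,D)·W)_{ij}·(Dⱼ − E[Dⱼ])`. -/
noncomputable def adjExp [MeasurableSpace Ω] (μ : Measure Ω) {m n : ℕ}
    (B : Fin m → Ω → ℝ) (D : Fin n → Ω → ℝ)
    (W : Matrix (Fin n) (Fin n) ℝ) : Fin m → Ω → ℝ :=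
  fun i ω => (∫ ω', B i ω' ∂μ) + ∑ j, (cov μ B D * W) i j * (D j ω - ∫ ω', D j ω' ∂μ)

/-- The adjusted covariance `Cov_D(B,C) = Cov(B − E_D(B), C − E_D(C))`. -/
noncomputable def adjCov [MeasurableSpace Ω] (μ : Measure Ω) {m p n : ℕ}
    (B : Fin m → Ω → ℝ) (C : Fin p → Ω → ℝ) (D : Fin n → Ω → ℝ)
    (W : Matrix (Fin n) (Fin n) ℝ) : Matrix (Fin m) (Fin p) ℝ :=
  cov μ (fun i ω => B i ω - adjExp μ B D W i ω) (fun j ω => C j ω - adjExp μ C D W j ω)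

section Aux

variable [MeasurableSpace Ω] {μ : Measure Ω} [IsProbabilityMeasure μ]

lemma myInteg {f : Ω → ℝ} (hf : MemLp f 2 μ) : Integrable f μ :=
  hf.integrable one_le_two

lemma myIntegMul {f g : Ω → ℝ} (hf : MemLp f 2 μ) (hg : MemLp g 2 μ) :
    Integrable (fun ω => f ω * g ω) μ :=
  memLp_one_iff_integrable.mp
    (hg.smul hf (hpqr := ⟨by simp [ENNReal.inv_two_add_inv_two]⟩) : MemLp (f • g) 1 μ)

lemma myMemCentered {f : Ω → ℝ} (hf : MemLp f 2 μ) :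
    MemLp (fun ω => f ω - ∫ ω', f ω' ∂μ) 2 μ :=
  hf.sub (memLp_const _)

lemma myIntegralCentered {f : Ω → ℝ} (hf : MemLp f 2 μ) :
    ∫ ω, (f ω - ∫ ω', f ω' ∂μ) ∂μ = 0 := by
  rw [integral_sub (myInteg hf) (integrable_const _), integral_const]
  simp

/-- The covariance entry as an integral of centered products. -/
lemma myCovCentered {m n : ℕ} {B : Fin m → Ω → ℝ} {D : Fin n → Ω → ℝ}
    (hB : ∀ i, MemLp (B i) 2 μ) (hD : ∀ j, MemLp (D j) 2 μ) (i : Fin m) (j : Fin n) :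
    cov μ B D i j
      = ∫ ω, (B i ω - ∫ ω', B i ω' ∂μ) * (D j ω - ∫ ω', D j ω' ∂μ) ∂μ := by
  set p := ∫ ω', B i ω' ∂μ with hp
  set q := ∫ ω', D j ω' ∂μ with hq
  have hexp : ∀ ω, (B i ω - p) * (D j ω - q)
      = B i ω * D j ω - p * D j ω - q * B i ω + p * q := fun ω => by ring
  have h1 : Integrable (fun ω => B i ω * D j ω) μ := myIntegMul (hB i) (hD j)
  have h2 : Integrable (fun ω => p * D j ω) μ := (myInteg (hD j)).const_mul p
  have h3 : Integrable (fun ω => q * B i ω) μ := (myInteg (hB i)).const_mul q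
  have h12 : Integrable (fun ω => B i ω * D j ω - p * D j ω) μ := h1.sub h2
  have h123 : Integrable (fun ω => B i ω * D j ω - p * D j ω - q * B i ω) μ := h12.sub h3
  calc cov μ B D i j = ∫ ω, B i ω * D j ω ∂μ - p * q := by
        simp [cov, ← hp, ← hq]
    _ = ∫ ω, (B i ω - p) * (D j ω - q) ∂μ := by
        simp only [hexp]
        rw [integral_add h123 (integrable_const _),
          integral_sub h12 h3, integral_sub h1 h2,
          integral_const, integral_const_mul, integral_const_mul, ← hp, ← hq]
        simp
        ring

lemma myIntegralMulSum {κ : Type*} [Fintype κ] {a : Ω → ℝ} (ha : MemLp a 2 μ)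
    {g : κ → Ω → ℝ} (hg : ∀ k, MemLp (g k) 2 μ) (c : κ → ℝ) :
    ∫ ω, a ω * (∑ k, c k * g k ω) ∂μ = ∑ k, c k * ∫ ω, a ω * g k ω ∂μ := by
  have hrw : ∀ ω, a ω * (∑ k, c k * g k ω) = ∑ k, c k * (a ω * g k ω) := by
    intro ω
    rw [Finset.mul_sum]
    exact Finset.sum_congr rfl fun k _ => by ring
  simp only [hrw]
  rw [integral_finset_sum]
  · exact Finset.sum_congr rfl fun k _ => integral_const_mul _ _
  · exact fun k _ => (myIntegMul ha (hg k)).const_mul (c k)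

end Aux

section MP

lemma myMPUnique {n : ℕ} {V W1 W2 : Matrix (Fin n) (Fin n) ℝ}
    (h1 : IsMoorePenrose V W1) (h2 : IsMoorePenrose V W2) : W1 = W2 := by
  obtain ⟨a1, b1, c1, d1⟩ := h1
  obtain ⟨a2, b2, c2, d2⟩ := h2
  have e1 : V * W1 = V * W2 := by
    calc V * W1 = (V * W1)ᵀ := c1.symm
      _ = ((V * W2 * V) * W1)ᵀ := by rw [a2]
      _ = ((V * W2) * (V * W1))ᵀ := by simp only [Matrix.mul_assoc]
      _ = (V * W1)ᵀ * (V * W2)ᵀ := by rw [Matrix.transpose_mul]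
      _ = (V * W1) * (V * W2) := by rw [c1, c2]
      _ = (V * W1 * V) * W2 := by simp only [Matrix.mul_assoc]
      _ = V * W2 := by rw [a1]
  have e2 : W1 * V = W2 * V := by
    calc W1 * V = (W1 * V)ᵀ := d1.symm
      _ = (W1 * (V * W2 * V))ᵀ := by rw [a2]
      _ = ((W1 * V) * (W2 * V))ᵀ := by simp only [Matrix.mul_assoc]
      _ = (W2 * V)ᵀ * (W1 * V)ᵀ := by rw [Matrix.transpose_mul]
      _ = (W2 * V) * (W1 * V) := by rw [d1, d2]
      _ = W2 * (V * W1 * V) := by simp only [Matrix.mul_assoc]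
      _ = W2 * V := by rw [a1]
  calc W1 = W1 * V * W1 := b1.symm
    _ = W2 * V * W1 := by rw [e2]
    _ = W2 * (V * W1) := by rw [Matrix.mul_assoc]
    _ = W2 * (V * W2) := by rw [e1]
    _ = W2 * V * W2 := by rw [Matrix.mul_assoc]
    _ = W2 := b2

lemma myMPSymm {n : ℕ} {V W : Matrix (Fin n) (Fin n) ℝ} (hV : Vᵀ = V)
    (h : IsMoorePenrose V W) : Wᵀ = W := by
  obtain ⟨a, b, c, d⟩ := h
  have hVW : V * Wᵀ = W * V := by
    calc V * Wᵀ = Vᵀᵀ * Wᵀ := by rw [Matrix.transpose_transpose]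
      _ = (W * Vᵀ)ᵀ := by rw [Matrix.transpose_mul]
      _ = (W * V)ᵀ := by rw [hV]
      _ = W * V := d
  have hWV : Wᵀ * V = V * W := by
    calc Wᵀ * V = Wᵀ * Vᵀᵀ := by rw [Matrix.transpose_transpose]
      _ = (Vᵀ * W)ᵀ := by rw [Matrix.transpose_mul]
      _ = (V * W)ᵀ := by rw [hV]
      _ = V * W := c
  have h' : IsMoorePenrose V Wᵀ := by
    refine ⟨?_, ?_, ?_, ?_⟩
    · have key : (V * Wᵀ * V)ᵀ = V := by
        calc (V * Wᵀ * V)ᵀ = Vᵀ * (Wᵀᵀ * Vᵀ) := by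
              simp only [Matrix.transpose_mul, Matrix.mul_assoc]
          _ = V * (W * V) := by rw [Matrix.transpose_transpose, hV]
          _ = V := by rw [← Matrix.mul_assoc, a]
      calc V * Wᵀ * V = ((V * Wᵀ * V)ᵀ)ᵀ := (Matrix.transpose_transpose _).symm
        _ = Vᵀ := by rw [key]
        _ = V := hV
    · have key : (Wᵀ * V * Wᵀ)ᵀ = W := by
        calc (Wᵀ * V * Wᵀ)ᵀ = Wᵀᵀ * (Vᵀ * Wᵀᵀ) := by
              simp only [Matrix.transpose_mul, Matrix.mul_assoc]
          _ = W * (V * W) := by rw [Matrix.transpose_transpose, hV]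
          _ = W := by rw [← Matrix.mul_assoc, b]
      calc Wᵀ * V * Wᵀ = ((Wᵀ * V * Wᵀ)ᵀ)ᵀ := (Matrix.transpose_transpose _).symm
        _ = Wᵀ := by rw [key]
    · rw [hVW, d]
    · rw [hWV, c]
  exact (myMPUnique ⟨a, b, c, d⟩ h').symm

end MP

lemma myCovTranspose [MeasurableSpace Ω] (μ : Measure Ω) {m n : ℕ}
    (B : Fin m → Ω → ℝ) (D : Fin n → Ω → ℝ) :
    (cov μ B D)ᵀ = cov μ D B := by
  ext i j
  simp [cov, mul_comm]

lemma myAdjCovEq [MeasurableSpace Ω] {μ : Measure Ω} [IsProbabilityMeasure μ]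
    {m p n : ℕ} {B : Fin m → Ω → ℝ} {C : Fin p → Ω → ℝ} {D : Fin n → Ω → ℝ}
    (hB : ∀ i, MemLp (B i) 2 μ) (hC : ∀ i, MemLp (C i) 2 μ)
    (hD : ∀ i, MemLp (D i) 2 μ) (W : Matrix (Fin n) (Fin n) ℝ) :
    adjCov μ B C D W =
      cov μ B C - cov μ B D * (cov μ C D * W)ᵀ - (cov μ B D * W) * (cov μ C D)ᵀ
        + (cov μ B D * W) * cov μ D D * (cov μ C D * W)ᵀ := by
  set M := cov μ B D * W with hM
  set N := cov μ C D * W with hN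
  have memDt : ∀ k, MemLp (fun ω => D k ω - ∫ ω', D k ω' ∂μ) 2 μ :=
    fun k => myMemCentered (hD k)
  have hDz : ∀ k, ∫ ω, (D k ω - ∫ ω', D k ω' ∂μ) ∂μ = 0 :=
    fun k => myIntegralCentered (hD k)
  ext i j
  set Bt : Ω → ℝ := fun ω => B i ω - ∫ ω', B i ω' ∂μ with hBt
  set Ct : Ω → ℝ := fun ω => C j ω - ∫ ω', C j ω' ∂μ with hCt
  set S : Ω → ℝ := fun ω => ∑ k, M i k * (D k ω - ∫ ω', D k ω' ∂μ) with hS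
  set T : Ω → ℝ := fun ω => ∑ k, N j k * (D k ω - ∫ ω', D k ω' ∂μ) with hT
  have memBt : MemLp Bt 2 μ := myMemCentered (hB i)
  have memCt : MemLp Ct 2 μ := myMemCentered (hC j)
  have memS : MemLp S 2 μ := by
    rw [hS]
    exact memLp_finset_sum _ (fun k _ => (memDt k).const_mul (M i k))
  have memT : MemLp T 2 μ := by
    rw [hT]
    exact memLp_finset_sum _ (fun k _ => (memDt k).const_mul (N j k))
  have hSz : ∫ ω, S ω ∂μ = 0 := by
    rw [hS, integral_finset_sum _ (fun k _ => ((myInteg (memDt k)).const_mul (M i k)))]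
    simp [integral_const_mul, hDz]
  have hTz : ∫ ω, T ω ∂μ = 0 := by
    rw [hT, integral_finset_sum _ (fun k _ => ((myInteg (memDt k)).const_mul (N j k)))]
    simp [integral_const_mul, hDz]
  have hf : (fun ω => B i ω - adjExp μ B D W i ω) = fun ω => Bt ω - S ω := by
    funext ω
    simp only [adjExp, hBt, hS]
    ring
  have hg : (fun ω => C j ω - adjExp μ C D W j ω) = fun ω => Ct ω - T ω := by
    funext ω
    simp only [adjExp, hCt, hT]
    ring
  have hfz : ∫ ω, (Bt ω - S ω) ∂μ = 0 := by
    rw [integral_sub (myInteg memBt) (myInteg memS),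
      myIntegralCentered (hB i), hSz, sub_zero]
  -- integrabilities for the expansion
  have i1 : Integrable (fun ω => Bt ω * Ct ω) μ := myIntegMul memBt memCt
  have i2 : Integrable (fun ω => Bt ω * T ω) μ := myIntegMul memBt memT
  have i3 : Integrable (fun ω => S ω * Ct ω) μ := myIntegMul memS memCt
  have i4 : Integrable (fun ω => S ω * T ω) μ := myIntegMul memS memT
  have i12 : Integrable (fun ω => Bt ω * Ct ω - Bt ω * T ω) μ := i1.sub i2
  have i123 : Integrable (fun ω => Bt ω * Ct ω - Bt ω * T ω - S ω * Ct ω) μ := i12.sub i3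
  have expand : ∫ ω, (Bt ω - S ω) * (Ct ω - T ω) ∂μ
      = ∫ ω, Bt ω * Ct ω ∂μ - ∫ ω, Bt ω * T ω ∂μ - ∫ ω, S ω * Ct ω ∂μ
        + ∫ ω, S ω * T ω ∂μ := by
    have : (fun ω => (Bt ω - S ω) * (Ct ω - T ω))
        = fun ω => Bt ω * Ct ω - Bt ω * T ω - S ω * Ct ω + S ω * T ω := by
      funext ω; ring
    rw [this, integral_add i123 i4, integral_sub i12 i3, integral_sub i1 i2]
  -- the four terms
  have t1 : ∫ ω, Bt ω * Ct ω ∂μ = cov μ B C i j := (myCovCentered hB hC i j).symm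
  have t2 : ∫ ω, Bt ω * T ω ∂μ = (cov μ B D * Nᵀ) i j := by
    rw [hT, myIntegralMulSum memBt memDt (N j), Matrix.mul_apply]
    refine Finset.sum_congr rfl fun l _ => ?_
    rw [Matrix.transpose_apply, myCovCentered hB hD i l]
    simp only [hBt]
    exact mul_comm _ _
  have t3 : ∫ ω, S ω * Ct ω ∂μ = (M * (cov μ C D)ᵀ) i j := by
    have hcomm : (fun ω => S ω * Ct ω) = fun ω => Ct ω * S ω := by
      funext ω; ring
    rw [hcomm, hS, myIntegralMulSum memCt memDt (M i), Matrix.mul_apply]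
    refine Finset.sum_congr rfl fun k _ => ?_
    rw [Matrix.transpose_apply, myCovCentered hC hD j k]
  have hDD : ∀ k l, cov μ D D l k = cov μ D D k l := by
    intro k l
    simp [cov, mul_comm]
  have t4 : ∫ ω, S ω * T ω ∂μ = (M * cov μ D D * Nᵀ) i j := by
    rw [hT, myIntegralMulSum memS memDt (N j)]
    have inner : ∀ l, ∫ ω, S ω * (D l ω - ∫ ω', D l ω' ∂μ) ∂μ
        = ∑ k, M i k * cov μ D D l k := by
      intro l
      have hcomm : (fun ω => S ω * (D l ω - ∫ ω', D l ω' ∂μ))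
          = fun ω => (D l ω - ∫ ω', D l ω' ∂μ) * S ω := by
        funext ω; ring
      rw [hcomm, hS, myIntegralMulSum (memDt l) memDt (M i)]
      refine Finset.sum_congr rfl fun k _ => ?_
      rw [myCovCentered hD hD l k]
    simp only [inner]
    simp only [Matrix.mul_apply, Matrix.transpose_apply, Finset.sum_mul, Finset.mul_sum]
    refine Finset.sum_congr rfl fun l _ => Finset.sum_congr rfl fun k _ => ?_
    rw [hDD k l]
    ring
  -- assemble
  have lhs : adjCov μ B C D W i j
      = ∫ ω, (Bt ω - S ω) * (Ct ω - T ω) ∂μ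
        - (∫ ω, (Bt ω - S ω) ∂μ) * (∫ ω, (Ct ω - T ω) ∂μ) := by
    have hf' : ∀ ω, B i ω - adjExp μ B D W i ω = Bt ω - S ω := fun ω => congrFun hf ω
    have hg' : ∀ ω, C j ω - adjExp μ C D W j ω = Ct ω - T ω := fun ω => congrFun hg ω
    simp only [adjCov, cov, Matrix.of_apply, hf', hg']
  rw [lhs, hfz, zero_mul, sub_zero, expand, t1, t2, t3, t4]
  simp [Matrix.sub_apply, Matrix.add_apply]

/-- Theorem 1, eq. (15) of the paper: if `Cov_Y(X,Z) = 0` then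
`T_X(Z) = P_Y(Z)·T_X(Y)·P_Z(Y)`, i.e.
`Cov(Z,X)·W_X·Cov(X,Z)·W_Z = Cov(Z,Y)·W_Y·[Cov(Y,X)·W_X·Cov(X,Y)·W_Y]·Cov(Y,Z)·W_Z`. -/
theorem transf_comp_of_adjOrth [MeasurableSpace Ω] (μ : Measure Ω) [IsProbabilityMeasure μ]
    {mx my mz : ℕ} (X : Fin mx → Ω → ℝ) (Y : Fin my → Ω → ℝ) (Z : Fin mz → Ω → ℝ)
    (hX : ∀ i, Measurable (X i) ∧ MemLp (X i) 2 μ)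
    (hY : ∀ i, Measurable (Y i) ∧ MemLp (Y i) 2 μ)
    (hZ : ∀ i, Measurable (Z i) ∧ MemLp (Z i) 2 μ)
    (WX : Matrix (Fin mx) (Fin mx) ℝ) (hWX : IsMoorePenrose (cov μ X X) WX)
    (WY : Matrix (Fin my) (Fin my) ℝ) (hWY : IsMoorePenrose (cov μ Y Y) WY)
    (WZ : Matrix (Fin mz) (Fin mz) ℝ) (hWZ : IsMoorePenrose (cov μ Z Z) WZ)
    (horth : adjCov μ X Z Y WY = 0) :
    cov μ Z X * WX * cov μ X Z * WZ =
      cov μ Z Y * WY * (cov μ Y X * WX * cov μ X Y * WY) * cov μ Y Z * WZ := by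
  have hX2 : ∀ i, MemLp (X i) 2 μ := fun i => (hX i).2
  have hY2 : ∀ i, MemLp (Y i) 2 μ := fun i => (hY i).2
  have hZ2 : ∀ i, MemLp (Z i) 2 μ := fun i => (hZ i).2
  have hWYs : WYᵀ = WY := myMPSymm (myCovTranspose μ Y Y) hWY
  have h := myAdjCovEq hX2 hZ2 hY2 WY
  rw [horth] at h
  have e2 : cov μ X Y * (cov μ Z Y * WY)ᵀ = cov μ X Y * WY * cov μ Y Z := by
    rw [Matrix.transpose_mul, hWYs, myCovTranspose μ Z Y, Matrix.mul_assoc]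
  have e3 : (cov μ X Y * WY) * (cov μ Z Y)ᵀ = cov μ X Y * WY * cov μ Y Z := by
    rw [myCovTranspose μ Z Y]
  have e4 : (cov μ X Y * WY) * cov μ Y Y * (cov μ Z Y * WY)ᵀ
      = cov μ X Y * WY * cov μ Y Z := by
    rw [Matrix.transpose_mul, hWYs, myCovTranspose μ Z Y]
    have assoc : cov μ X Y * WY * cov μ Y Y * (WY * cov μ Y Z)
        = cov μ X Y * (WY * cov μ Y Y * WY) * cov μ Y Z := by
      simp only [Matrix.mul_assoc]
    rw [assoc, hWY.2.1]
  rw [e2, e3, e4] at h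
  have key : cov μ X Z = cov μ X Y * WY * cov μ Y Z := by
    have h3 : cov μ X Z - cov μ X Y * WY * cov μ Y Z = 0 := by
      calc cov μ X Z - cov μ X Y * WY * cov μ Y Z
          = cov μ X Z - cov μ X Y * WY * cov μ Y Z - cov μ X Y * WY * cov μ Y Z
            + cov μ X Y * WY * cov μ Y Z := by abel
        _ = 0 := h.symm
    exact sub_eq_zero.mp h3
  have keyT : cov μ Z X = cov μ Z Y * (WY * cov μ Y X) := by
    have h5 := congrArg Matrix.transpose key
    rw [myCovTranspose μ X Z, Matrix.transpose_mul, Matrix.transpose_mul, hWYs,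
      myCovTranspose μ Y Z, myCovTranspose μ X Y] at h5
    exact h5
  rw [key, keyT]
  simp only [Matrix.mul_assoc]
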